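/- The exceptional conic C = {(x,y) : (x−1)(y−1) = 1} is collapsed by f to the single point (0, a+1): for all a, b ∈ ℂ and every (x,y) ∈ ℂ² with x ≠ 0, x ≠ 1, y ≠ 0 and (x−1)(y−1) = 1, one has f(x,y) = (0, a+1). -/
import Mathlib

/-- First component of the birational map `f = f_{a,b}`. -/
noncomputable def f1 (x y : ℂ) : ℂ := 1 - x + x / y

/-- Second component of the birational map `f = f_{a,b}`. -/
noncomputable def f2 (a b x y : ℂ) : ℂ := b * f1 x y + a + y - y / x

/-- The exceptional conic `C = {(x-1)(y-1) = 1}` is collapsed by `f` to the single point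
`(0, a+1)`. -/
theorem conic_collapses (a b : ℂ) (x y : ℂ) (hx0 : x ≠ 0) (hx1 : x ≠ 1) (hy0 : y ≠ 0)
    (hC : (x - 1) * (y - 1) = 1) :
    (f1 x y, f2 a b x y) = (0, a + 1) := by
  have hxy : x * y = x + y := by ring_nf at hC ⊢; linear_combination hC
  have h1 : f1 x y = 0 := by
    unfold f1; field_simp; linear_combination -hxy
  have h2 : f2 a b x y = a + 1 := by
    unfold f2; rw [h1]; field_simp; linear_combination hxy
  simp [h1, h2]
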